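/- The augmented guiding vector field χ(ξ) = (f₁′(w) − k₁φ₁, f₂′(w) − k₂φ₂, 1 + k₁φ₁f₁′(w) + k₂φ₂f₂′(w)) is nonzero at every point ξ ∈ ℝ³, provided k₁, k₂ > 0; i.e., the augmented field has no singular points. -/
import Mathlib

/-- The augmented guiding vector field
χ(ξ) = (f₁′(w) − k₁φ₁, f₂′(w) − k₂φ₂, 1 + k₁φ₁f₁′(w) + k₂φ₂f₂′(w)), with
φ₁ = p_x − f₁(w), φ₂ = p_y − f₂(w), is nonzero at every point, provided k₁, k₂ > 0. -/
theorem stmt_1 (f₁ f₂ : ℝ → ℝ) (hf₁ : Differentiable ℝ f₁) (hf₂ : Differentiable ℝ f₂)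
    (k₁ k₂ : ℝ) (hk₁ : 0 < k₁) (hk₂ : 0 < k₂) (px py w : ℝ) :
    (![deriv f₁ w - k₁ * (px - f₁ w),
       deriv f₂ w - k₂ * (py - f₂ w),
       1 + k₁ * (px - f₁ w) * deriv f₁ w + k₂ * (py - f₂ w) * deriv f₂ w] : Fin 3 → ℝ)
      ≠ 0 := by
  intro h
  have h0 := congrFun h 0
  have h1 := congrFun h 1
  have h2 := congrFun h 2
  simp [Matrix.cons_val_zero, Matrix.cons_val_one] at h0 h1 h2
  have e0 : deriv f₁ w = k₁ * (px - f₁ w) := by linarith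
  have e1 : deriv f₂ w = k₂ * (py - f₂ w) := by linarith
  rw [e0, e1] at h2
  nlinarith [sq_nonneg (k₁ * (px - f₁ w)), sq_nonneg (k₂ * (py - f₂ w))]
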